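/- Suppose the homomorphism θ'̄ : H²(G/Z, D) → H²(H/Z, D) ⊕ H²(K/Z, D) ⊕ Hom(H/Z ⊗ K/Z, D), defined for the central product G/Z of H/Z and K/Z in the same way as θ', is an isomorphism. Then the inflation maps H²(H/A, D) → H²(H/Z, D) and H²(K/A, D) → H²(K/Z, D) are surjective, and the homomorphism λ* : Hom(H/A ⊗ K/A, D) → Hom(H/Z ⊗ K/Z, D) induced by the natural projection H/Z ⊗ K/Z → H/A ⊗ K/A is an isomorphism; consequently, if the embedding of Theorem B(ii) is an isomorphism, then so is the embedding of Theorem B(i). -/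

import Mathlib

/-!
Setting (central products): `G` is a group with normal subgroups `H` and `K` such that
`G = HK` (i.e. `H ⊔ K = ⊤`) and `[H, K] = 1` (i.e. every element of `H` commutes with
every element of `K`).  We set `A = H ⊓ K` and `Z = ⁅H,H⁆ ⊓ ⁅K,K⁆`; both are central
in `G`.  Coefficients are taken in a divisible abelian group `D`, regarded as a trivial
module.  Second cohomology `H2 X D` is realized concretely as (inhomogeneous)
2-cocycles modulo 2-coboundaries, and `Hom(X, D)` is realized as `Additive X →+ D`.
-/

open scoped TensorProduct

set_option maxHeartbeats 1000000
set_option synthInstance.maxHeartbeats 1000000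
set_option synthInstance.maxSize 2000

namespace SchurCP

variable (G : Type) [Group G] (D : Type) [AddCommGroup D]

/-- The group of 2-cocycles on `G` with values in the trivial module `D`. -/
def cocycles2 : AddSubgroup (G → G → D) where
  carrier := {f | ∀ g h k : G, f g h + f (g * h) k = f h k + f g (h * k)}
  zero_mem' := by intro g h k; simp
  add_mem' := by
    intro a b ha hb g h k
    simp only [Pi.add_apply]
    rw [add_add_add_comm, ha g h k, hb g h k, add_add_add_comm]
  neg_mem' := by
    intro a ha g h k
    simp only [Pi.neg_apply]
    rw [← neg_add, ← neg_add, ha g h k]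

/-- The group of 2-coboundaries on `G` with values in the trivial module `D`. -/
def coboundaries2 : AddSubgroup (G → G → D) where
  carrier := {f | ∃ φ : G → D, ∀ g h : G, f g h = φ g + φ h - φ (g * h)}
  zero_mem' := ⟨0, by simp⟩
  add_mem' := by
    rintro a b ⟨φ, hφ⟩ ⟨ψ, hψ⟩
    exact ⟨φ + ψ, fun g h => by simp only [Pi.add_apply, hφ g h, hψ g h]; abel⟩
  neg_mem' := by
    rintro a ⟨φ, hφ⟩
    exact ⟨-φ, fun g h => by simp only [Pi.neg_apply, hφ g h]; abel⟩

/-- The second cohomology group `H²(G, D)` of `G` with coefficients in the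
trivial module `D`. -/
def H2 : Type := cocycles2 G D ⧸ (coboundaries2 G D).addSubgroupOf (cocycles2 G D)

instance : AddCommGroup (H2 G D) :=
  QuotientAddGroup.Quotient.addCommGroup ((coboundaries2 G D).addSubgroupOf (cocycles2 G D))

variable {G D}

/-- The cohomology class of a 2-cocycle. -/
abbrev H2mk (f : cocycles2 G D) : H2 G D := QuotientAddGroup.mk f

/-- Pullback of a 2-cocycle along a group homomorphism. -/
def pullCocycle {G' : Type} [Group G'] (π : G' →* G) :
    cocycles2 G D →+ cocycles2 G' D where
  toFun f := ⟨fun x y => (f : G → G → D) (π x) (π y), by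
    intro x y z
    simpa only [map_mul] using f.2 (π x) (π y) (π z)⟩
  map_zero' := rfl
  map_add' _ _ := rfl

/-- The homomorphism `H²(G, D) → H²(G', D)` induced by a group homomorphism
`π : G' → G`; this specializes to restriction maps (for inclusions of subgroups)
and to inflation maps (for quotient maps). -/
def H2Map {G' : Type} [Group G'] (π : G' →* G) : H2 G D →+ H2 G' D :=
  QuotientAddGroup.map _ _ (pullCocycle π) (by
    intro f hf
    rw [AddSubgroup.mem_addSubgroupOf] at hf
    rw [AddSubgroup.mem_comap, AddSubgroup.mem_addSubgroupOf]
    obtain ⟨φ, hφ⟩ := hf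
    exact ⟨fun x => φ (π x), fun x y => by
      show (f : G → G → D) (π x) (π y) = _
      rw [hφ (π x) (π y), ← map_mul]⟩)

theorem commutator_le_self {X : Type} [Group X] (H : Subgroup X) : ⁅H, H⁆ ≤ H := by
  rw [Subgroup.commutator_le]
  intro g₁ h₁ g₂ h₂
  rw [commutatorElement_def]
  exact H.mul_mem (H.mul_mem (H.mul_mem h₁ h₂) (H.inv_mem h₁)) (H.inv_mem h₂)

theorem inf_commutator_le_inf {X : Type} [Group X] (H K : Subgroup X) :
    ⁅H, H⁆ ⊓ ⁅K, K⁆ ≤ H ⊓ K :=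
  inf_le_inf (commutator_le_self H) (commutator_le_self K)

theorem subgroupOf_le {X : Type} [Group X] {B C : Subgroup X} (h : B ≤ C)
    (J : Subgroup X) : B.subgroupOf J ≤ C.subgroupOf J := fun _x hx => h hx

/-- The natural projection `X/N → X/M` for `N ≤ M`. -/
def quotProj {X : Type} [Group X] {N M : Subgroup X} [N.Normal] [M.Normal] (h : N ≤ M) :
    (X ⧸ N) →* (X ⧸ M) :=
  QuotientGroup.map N M (MonoidHom.id X) (by rwa [Subgroup.comap_id])

/-- The inflation homomorphism `H²(X/M, D) → H²(X/N, D)` for `N ≤ M`. -/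
def inflMap {X : Type} [Group X] {N M : Subgroup X} [N.Normal] [M.Normal]
    (h : N ≤ M) (D : Type) [AddCommGroup D] : H2 (X ⧸ M) D →+ H2 (X ⧸ N) D :=
  H2Map (quotProj h)

/-- The natural homomorphism `H/(A ∩ H) → X/A` for subgroups `A, H` of `X`;
for `A ≤ H` this realizes `H/A` as a subgroup of `X/A`. -/
def quotInclusion {X : Type} [Group X] (H A : Subgroup X) [A.Normal]
    [(A.subgroupOf H).Normal] : (↥H ⧸ A.subgroupOf H) →* X ⧸ A :=
  QuotientGroup.map (A.subgroupOf H) A H.subtype (fun _x hx => hx)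

/-- The abelian tensor product `X ⊗ Y = X/[X,X] ⊗_ℤ Y/[Y,Y]` of two groups. -/
abbrev AbTensor (X Y : Type) [Group X] [Group Y] : Type :=
  TensorProduct ℤ (Additive (Abelianization X)) (Additive (Abelianization Y))

/-- The element `x[X,X] ⊗ y[Y,Y]` of the abelian tensor product. -/
noncomputable abbrev tmulAb {X Y : Type} [Group X] [Group Y] (x : X) (y : Y) :
    AbTensor X Y :=
  Additive.ofMul (Abelianization.of x) ⊗ₜ[ℤ] Additive.ofMul (Abelianization.of y)

/-- The map on abelian tensor products induced by a pair of group homomorphisms. -/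
noncomputable def abTensorMap {X Y X' Y' : Type} [Group X] [Group Y] [Group X'] [Group Y']
    (f : X →* X') (g : Y →* Y') : AbTensor X Y →ₗ[ℤ] AbTensor X' Y' :=
  TensorProduct.map (MonoidHom.toAdditive (Abelianization.map f)).toIntLinearMap
    (MonoidHom.toAdditive (Abelianization.map g)).toIntLinearMap

section Descent

variable {Q D : Type} [Group Q] [AddCommGroup D]

theorem cocycle_id (f : cocycles2 Q D) (a b c : Q) :
    (f : Q → Q → D) a b + (f : Q → Q → D) (a * b) c
      = (f : Q → Q → D) b c + (f : Q → Q → D) a (b * c) := f.2 a b c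

theorem cocycle_one_left (f : cocycles2 Q D) (q : Q) :
    (f : Q → Q → D) 1 q = (f : Q → Q → D) 1 1 := by
  have h := f.2 1 1 q
  simp only [one_mul] at h
  exact (add_right_cancel h).symm

theorem cocycle_one_right (f : cocycles2 Q D) (q : Q) :
    (f : Q → Q → D) q 1 = (f : Q → Q → D) 1 1 := by
  have h := f.2 q 1 1
  simp only [mul_one, one_mul] at h
  -- h : f q 1 + f q 1 = f 1 1 + f q 1
  exact add_right_cancel h

/-- The central extension of `Q` by `D` determined by a 2-cocycle `f`. -/
def Ext (f : cocycles2 Q D) : Type := D × Q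

namespace Ext

variable (f : cocycles2 Q D)

instance : Mul (Ext f) :=
  ⟨fun x y => (x.1 + y.1 + (f : Q → Q → D) x.2 y.2, x.2 * y.2)⟩

instance : One (Ext f) := ⟨(-(f : Q → Q → D) 1 1, 1)⟩

instance : Inv (Ext f) :=
  ⟨fun x => (-(f : Q → Q → D) 1 1 - x.1 - (f : Q → Q → D) x.2⁻¹ x.2, x.2⁻¹)⟩

theorem mul_def (x y : Ext f) :
    x * y = (x.1 + y.1 + (f : Q → Q → D) x.2 y.2, x.2 * y.2) := rfl

theorem one_def : (1 : Ext f) = (-(f : Q → Q → D) 1 1, 1) := rfl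

instance : Group (Ext f) :=
  Group.ofLeftAxioms
    (by
      intro x y z
      show (_, _) = (_, _)
      refine Prod.ext ?_ (mul_assoc _ _ _)
      show x.1 + y.1 + (f : Q → Q → D) x.2 y.2 + z.1 + (f : Q → Q → D) (x.2 * y.2) z.2
          = x.1 + (y.1 + z.1 + (f : Q → Q → D) y.2 z.2) + (f : Q → Q → D) x.2 (y.2 * z.2)
      have key := cocycle_id f x.2 y.2 z.2
      calc x.1 + y.1 + (f : Q → Q → D) x.2 y.2 + z.1 + (f : Q → Q → D) (x.2 * y.2) z.2
          = x.1 + y.1 + z.1 + ((f : Q → Q → D) x.2 y.2 + (f : Q → Q → D) (x.2 * y.2) z.2) := by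
            abel
        _ = x.1 + y.1 + z.1 + ((f : Q → Q → D) y.2 z.2 + (f : Q → Q → D) x.2 (y.2 * z.2)) := by
            rw [key]
        _ = x.1 + (y.1 + z.1 + (f : Q → Q → D) y.2 z.2) + (f : Q → Q → D) x.2 (y.2 * z.2) := by
            abel)
    (by
      intro x
      show (_, _) = x
      refine Prod.ext ?_ (one_mul _)
      show -(f : Q → Q → D) 1 1 + x.1 + (f : Q → Q → D) 1 x.2 = x.1
      rw [cocycle_one_left f x.2]
      abel)
    (by
      intro x
      show (_, _) = (1 : Ext f)
      refine Prod.ext ?_ (inv_mul_cancel _)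
      show -(f : Q → Q → D) 1 1 - x.1 - (f : Q → Q → D) x.2⁻¹ x.2 + x.1
          + (f : Q → Q → D) x.2⁻¹ x.2 = -(f : Q → Q → D) 1 1
      abel)

variable {f}

/-- The central embedding of `D` into `Ext f`. -/
def iota (d : D) : Ext f := (d - (f : Q → Q → D) 1 1, 1)

theorem iota_mul (d d' : D) : (iota d : Ext f) * iota d' = iota (d + d') := by
  show (_, _) = (_, _)
  refine Prod.ext ?_ (one_mul _)
  show d - (f : Q → Q → D) 1 1 + (d' - (f : Q → Q → D) 1 1) + (f : Q → Q → D) 1 1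
      = d + d' - (f : Q → Q → D) 1 1
  abel

theorem iota_zero : (iota 0 : Ext f) = 1 := by
  show (_, _) = (_, _)
  exact Prod.ext (by abel) rfl

theorem iota_mul_pair (d : D) (x : Ext f) : iota d * x = (show Ext f from (d + x.1, x.2)) := by
  show (_, _) = (_, _)
  refine Prod.ext ?_ (one_mul _)
  show d - (f : Q → Q → D) 1 1 + x.1 + (f : Q → Q → D) 1 x.2 = d + x.1
  rw [cocycle_one_left f x.2]
  abel

theorem pair_mul_iota (d : D) (x : Ext f) : x * iota d = (show Ext f from (d + x.1, x.2)) := by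
  show (_, _) = (_, _)
  refine Prod.ext ?_ (mul_one _)
  show x.1 + (d - (f : Q → Q → D) 1 1) + (f : Q → Q → D) x.2 1 = d + x.1
  rw [cocycle_one_right f x.2]
  abel

theorem iota_comm (d : D) (x : Ext f) : iota d * x = x * iota d := by
  rw [iota_mul_pair, pair_mul_iota]

theorem iota_injective : Function.Injective (iota : D → Ext f) := by
  intro d d' h
  have h1 : d - (f : Q → Q → D) 1 1 = d' - (f : Q → Q → D) 1 1 := congrArg Prod.fst h
  exact sub_left_inj.mp h1

end Ext

/-- Descent of a cohomology class along a central quotient over which the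
corresponding extension splits centrally. -/
theorem descent (f : cocycles2 Q D) (B : Subgroup Q) [B.Normal]
    (hcent : ∀ b ∈ B, ∀ q : Q, b * q = q * b)
    (hfc : ∀ b ∈ B, ∀ q : Q, (f : Q → Q → D) b q = (f : Q → Q → D) q b)
    (ψ : Q → D)
    (hψ : ∀ b ∈ B, ∀ b' ∈ B,
      (f : Q → Q → D) b b' = ψ b + ψ b' - ψ (b * b')) :
    ∃ v : cocycles2 (Q ⧸ B) D,
      pullCocycle (QuotientGroup.mk' B) v - f ∈
        (coboundaries2 Q D).addSubgroupOf (cocycles2 Q D) := by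
  classical
  have hψ1 : ψ 1 = (f : Q → Q → D) 1 1 := by
    have h := hψ 1 B.one_mem 1 B.one_mem
    rw [mul_one, add_sub_cancel_right] at h
    exact h.symm
  -- the splitting over B, as a homomorphism into Ext f
  let s : ↥B →* Ext f :=
    { toFun := fun b => (-ψ (b : Q), (b : Q))
      map_one' := by
        refine Prod.ext ?_ rfl
        show -ψ (1 : Q) = -(f : Q → Q → D) 1 1
        rw [hψ1]
      map_mul' := by
        intro b b'
        refine Prod.ext ?_ rfl
        show -ψ ((b : Q) * b') = -ψ (b : Q) + -ψ (b' : Q) + (f : Q → Q → D) b b'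
        rw [hψ b b.2 b' b'.2]
        abel }
  have s_central : ∀ (b : ↥B) (x : Ext f), s b * x = x * s b := by
    intro b x
    refine Prod.ext ?_ ?_
    · show -ψ (b : Q) + x.1 + (f : Q → Q → D) b x.2
        = x.1 + -ψ (b : Q) + (f : Q → Q → D) x.2 b
      rw [hfc b b.2 x.2]; abel
    · exact hcent b b.2 x.2
  let S : Subgroup (Ext f) := s.range
  have hSnormal : S.Normal := by
    constructor
    rintro x ⟨b, rfl⟩ g
    have := s_central b g
    rw [← this, mul_assoc, mul_inv_cancel, mul_one]
    exact ⟨b, rfl⟩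
  letI := hSnormal
  -- notation for the quotient extentsion
  let pe : D → Q → Ext f := fun d q => (d, q)
  let σ : Q ⧸ B → Q := fun x => Quotient.out x
  have hσ : ∀ x : Q ⧸ B, (QuotientGroup.mk (σ x) : Q ⧸ B) = x := fun x => Quotient.out_eq' x
  let β : Q ⧸ B → Q ⧸ B → Q := fun x y => σ x * σ y * (σ (x * y))⁻¹
  have hβ : ∀ x y, β x y ∈ B := by
    intro x y
    have : (QuotientGroup.mk (β x y) : Q ⧸ B) = 1 := by
      show (QuotientGroup.mk (σ x * σ y * (σ (x * y))⁻¹) : Q ⧸ B) = 1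
      rw [QuotientGroup.mk_mul, QuotientGroup.mk_mul, QuotientGroup.mk_inv, hσ, hσ, hσ]
      group
    exact (QuotientGroup.eq_one_iff _).mp this
  let v₀ : Q ⧸ B → Q ⧸ B → D := fun x y =>
    (f : Q → Q → D) (σ x) (σ y) + ψ (β x y) - (f : Q → Q → D) (β x y) (σ (x * y))
  let Lb : Q ⧸ B → Ext f ⧸ S := fun x => QuotientGroup.mk (pe 0 (σ x))
  let ib : D → Ext f ⧸ S := fun d => QuotientGroup.mk (Ext.iota d)
  have ib_mul : ∀ d d', ib d * ib d' = ib (d + d') := by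
    intro d d'
    show QuotientGroup.mk _ * QuotientGroup.mk _ = QuotientGroup.mk _
    rw [← QuotientGroup.mk_mul, Ext.iota_mul]
  have ib_comm : ∀ d (e : Ext f ⧸ S), ib d * e = e * ib d := by
    intro d e
    induction e using QuotientGroup.induction_on with
    | H x => show QuotientGroup.mk _ * QuotientGroup.mk _ = QuotientGroup.mk _ * QuotientGroup.mk _
             rw [← QuotientGroup.mk_mul, ← QuotientGroup.mk_mul, Ext.iota_comm]
  have ib_inj : Function.Injective ib := by
    intro d d' h
    have h2 : (Ext.iota d)⁻¹ * (Ext.iota d' : Ext f) ∈ S := QuotientGroup.eq.mp h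
    rw [show (Ext.iota d)⁻¹ = Ext.iota (f := f) (-d) from
        inv_eq_of_mul_eq_one_left (by rw [Ext.iota_mul, neg_add_cancel, Ext.iota_zero]),
      Ext.iota_mul] at h2
    obtain ⟨b, hb⟩ := h2
    have hb2 : (b : Q) = 1 := congrArg Prod.snd hb
    have hb1 : -ψ (b : Q) = -d + d' - (f : Q → Q → D) 1 1 := congrArg Prod.fst hb
    rw [hb2, hψ1] at hb1
    have h4 : -d + d' = 0 := by
      have := congrArg (fun t => t + (f : Q → Q → D) 1 1) hb1
      simpa using this.symm
    rw [neg_add_eq_zero] at h4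
    exact h4
  -- the key multiplication law in the quotient extension
  have star : ∀ x y : Q ⧸ B, Lb x * Lb y = ib (v₀ x y) * Lb (x * y) := by
    intro x y
    show QuotientGroup.mk _ * QuotientGroup.mk _ = QuotientGroup.mk _ * QuotientGroup.mk _
    rw [← QuotientGroup.mk_mul, ← QuotientGroup.mk_mul]
    have hE : pe 0 (σ x) * pe 0 (σ y)
        = s ⟨β x y, hβ x y⟩ * (Ext.iota (v₀ x y) * pe 0 (σ (x * y))) := by
      rw [Ext.iota_mul_pair]
      refine Prod.ext ?_ ?_
      · show (0 : D) + 0 + (f : Q → Q → D) (σ x) (σ y)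
          = -ψ (β x y) + (v₀ x y + 0) + (f : Q → Q → D) (β x y) (σ (x * y))
        show (0 : D) + 0 + (f : Q → Q → D) (σ x) (σ y)
          = -ψ (β x y) + ((f : Q → Q → D) (σ x) (σ y) + ψ (β x y)
              - (f : Q → Q → D) (β x y) (σ (x * y)) + 0)
            + (f : Q → Q → D) (β x y) (σ (x * y))
        abel
      · show σ x * σ y = σ x * σ y * (σ (x * y))⁻¹ * σ (x * y)
        group
    rw [hE, QuotientGroup.mk_mul]
    have hs1 : (QuotientGroup.mk (s ⟨β x y, hβ x y⟩) : Ext f ⧸ S) = 1 :=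
      (QuotientGroup.eq_one_iff _).mpr ⟨_, rfl⟩
    rw [hs1, one_mul, QuotientGroup.mk_mul]
  -- the cocycle identity for v₀
  have hv : ∀ x y z : Q ⧸ B, v₀ x y + v₀ (x * y) z = v₀ y z + v₀ x (y * z) := by
    intro x y z
    have h1 : Lb x * Lb y * Lb z = ib (v₀ x y + v₀ (x * y) z) * Lb (x * y * z) := by
      calc Lb x * Lb y * Lb z = ib (v₀ x y) * Lb (x * y) * Lb z := by rw [star]
        _ = ib (v₀ x y) * (ib (v₀ (x * y) z) * Lb (x * y * z)) := by rw [mul_assoc, star]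
        _ = ib (v₀ x y + v₀ (x * y) z) * Lb (x * y * z) := by rw [← mul_assoc, ib_mul]
    have h2 : Lb x * Lb y * Lb z = ib (v₀ y z + v₀ x (y * z)) * Lb (x * y * z) := by
      calc Lb x * Lb y * Lb z = Lb x * (ib (v₀ y z) * Lb (y * z)) := by rw [mul_assoc, star]
        _ = ib (v₀ y z) * (Lb x * Lb (y * z)) := by
            rw [← mul_assoc, ← ib_comm, mul_assoc]
        _ = ib (v₀ y z) * (ib (v₀ x (y * z)) * Lb (x * (y * z))) := by rw [star]
        _ = ib (v₀ y z + v₀ x (y * z)) * Lb (x * y * z) := by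
            rw [← mul_assoc, ib_mul, mul_assoc]
    exact ib_inj (mul_right_cancel (h1.symm.trans h2))
  -- the comparison coboundary
  let δ : Q → Q := fun q => q * (σ (QuotientGroup.mk q))⁻¹
  have hδ : ∀ q, δ q ∈ B := by
    intro q
    have : (QuotientGroup.mk (δ q) : Q ⧸ B) = 1 := by
      show (QuotientGroup.mk (q * (σ (QuotientGroup.mk q))⁻¹) : Q ⧸ B) = 1
      rw [QuotientGroup.mk_mul, QuotientGroup.mk_inv, hσ]
      group
    exact (QuotientGroup.eq_one_iff _).mp this
  let χ : Q → D := fun q => ψ (δ q) - (f : Q → Q → D) (δ q) (σ (QuotientGroup.mk q))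
  let M : Q → Ext f ⧸ S := fun q => QuotientGroup.mk (pe 0 q)
  have hM : ∀ q : Q, M q = ib (χ q) * Lb (QuotientGroup.mk q) := by
    intro q
    show QuotientGroup.mk _ = QuotientGroup.mk _ * QuotientGroup.mk _
    rw [← QuotientGroup.mk_mul]
    have hE : pe 0 q
        = s ⟨δ q, hδ q⟩ * (Ext.iota (χ q) * pe 0 (σ (QuotientGroup.mk q))) := by
      rw [Ext.iota_mul_pair]
      refine Prod.ext ?_ ?_
      · show (0 : D)
          = -ψ (δ q) + ((ψ (δ q) - (f : Q → Q → D) (δ q) (σ (QuotientGroup.mk q))) + 0)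
            + (f : Q → Q → D) (δ q) (σ (QuotientGroup.mk q))
        abel
      · show q = q * (σ (QuotientGroup.mk q))⁻¹ * σ (QuotientGroup.mk q)
        group
    rw [hE, QuotientGroup.mk_mul]
    have hs1 : (QuotientGroup.mk (s ⟨δ q, hδ q⟩) : Ext f ⧸ S) = 1 :=
      (QuotientGroup.eq_one_iff _).mpr ⟨_, rfl⟩
    rw [hs1, one_mul]
  have hMmul : ∀ q q' : Q, M q * M q' = ib ((f : Q → Q → D) q q') * M (q * q') := by
    intro q q'
    show QuotientGroup.mk _ * QuotientGroup.mk _ = QuotientGroup.mk _ * QuotientGroup.mk _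
    rw [← QuotientGroup.mk_mul, ← QuotientGroup.mk_mul]
    congr 1
    rw [Ext.iota_mul_pair]
    refine Prod.ext ?_ rfl
    show (0 : D) + 0 + (f : Q → Q → D) q q' = (f : Q → Q → D) q q' + 0
    abel
  have final : ∀ q q' : Q,
      χ q + χ q' + v₀ (QuotientGroup.mk q) (QuotientGroup.mk q')
        = (f : Q → Q → D) q q' + χ (q * q') := by
    intro q q'
    have h1 : M q * M q'
        = ib (χ q + χ q' + v₀ (QuotientGroup.mk q) (QuotientGroup.mk q'))
          * Lb (QuotientGroup.mk q * QuotientGroup.mk q') := by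
      calc M q * M q'
          = ib (χ q) * Lb (QuotientGroup.mk q) * (ib (χ q') * Lb (QuotientGroup.mk q')) := by
            rw [hM, hM]
        _ = ib (χ q) * (ib (χ q') * (Lb (QuotientGroup.mk q) * Lb (QuotientGroup.mk q'))) := by
            rw [mul_assoc, ← mul_assoc (Lb (QuotientGroup.mk q)), ← ib_comm, mul_assoc]
        _ = ib (χ q) * (ib (χ q')
              * (ib (v₀ (QuotientGroup.mk q) (QuotientGroup.mk q'))
                * Lb (QuotientGroup.mk q * QuotientGroup.mk q'))) := by rw [star]
        _ = ib (χ q + χ q' + v₀ (QuotientGroup.mk q) (QuotientGroup.mk q'))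
              * Lb (QuotientGroup.mk q * QuotientGroup.mk q') := by
            rw [← mul_assoc, ← mul_assoc, ib_mul, ib_mul]
    have h2 : M q * M q'
        = ib ((f : Q → Q → D) q q' + χ (q * q'))
          * Lb (QuotientGroup.mk q * QuotientGroup.mk q') := by
      calc M q * M q' = ib ((f : Q → Q → D) q q') * M (q * q') := hMmul q q'
        _ = ib ((f : Q → Q → D) q q') * (ib (χ (q * q')) * Lb (QuotientGroup.mk (q * q'))) := by
            rw [hM]
        _ = ib ((f : Q → Q → D) q q' + χ (q * q'))
              * Lb (QuotientGroup.mk q * QuotientGroup.mk q') := by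
            rw [← mul_assoc, ib_mul, QuotientGroup.mk_mul]
    exact ib_inj (mul_right_cancel (h1.symm.trans h2))
  refine ⟨⟨v₀, hv⟩, ?_⟩
  rw [AddSubgroup.mem_addSubgroupOf]
  refine ⟨fun q => -χ q, ?_⟩
  intro q q'
  show v₀ (QuotientGroup.mk q) (QuotientGroup.mk q') - (f : Q → Q → D) q q'
      = -χ q + -χ q' - -χ (q * q')
  have h7 : v₀ (QuotientGroup.mk q) (QuotientGroup.mk q')
      = (f : Q → Q → D) q q' + χ (q * q') - χ q - χ q' := by
    calc v₀ (QuotientGroup.mk q) (QuotientGroup.mk q')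
        = χ q + χ q' + v₀ (QuotientGroup.mk q) (QuotientGroup.mk q') - χ q - χ q' := by abel
      _ = (f : Q → Q → D) q q' + χ (q * q') - χ q - χ q' := by rw [final q q']
  rw [h7]
  abel

end Descent


section Core

variable {G : Type} [Group G] {D : Type} [AddCommGroup D]

theorem descend_class (H K A Z : Subgroup G)
    (hZA : Z ≤ A) (hAH : A ≤ H) (hAK : A ≤ K)
    (hcomm : ∀ h ∈ H, ∀ k ∈ K, Commute h k)
    [Z.Normal] [(Z.subgroupOf H).Normal] [(A.subgroupOf H).Normal] [(Z.subgroupOf K).Normal]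
    (f : cocycles2 (G ⧸ Z) D)
    (hν : ∀ (h : ↥H) (k : ↥K),
      (f : (G ⧸ Z) → (G ⧸ Z) → D) (QuotientGroup.mk ↑h) (QuotientGroup.mk ↑k)
        = (f : (G ⧸ Z) → (G ⧸ Z) → D) (QuotientGroup.mk ↑k) (QuotientGroup.mk ↑h))
    (hres : pullCocycle (quotInclusion K Z) f ∈
      (coboundaries2 (↥K ⧸ Z.subgroupOf K) D).addSubgroupOf (cocycles2 _ D)) :
    ∃ v : cocycles2 (↥H ⧸ A.subgroupOf H) D,
      pullCocycle (quotProj (subgroupOf_le hZA H)) v - pullCocycle (quotInclusion H Z) f ∈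
        (coboundaries2 (↥H ⧸ Z.subgroupOf H) D).addSubgroupOf (cocycles2 _ D) := by
  classical
  set fH := pullCocycle (quotInclusion H Z) f with hfH
  set B : Subgroup (↥H ⧸ Z.subgroupOf H) :=
    (A.subgroupOf H).map (QuotientGroup.mk' (Z.subgroupOf H)) with hBdef
  have memB : ∀ b ∈ B, ∃ a : ↥H, (↑a : G) ∈ A ∧ QuotientGroup.mk a = b := by
    intro b hb
    obtain ⟨a, ha, rfl⟩ := hb
    exact ⟨a, ha, rfl⟩
  have hcentB : ∀ b ∈ B, ∀ q : ↥H ⧸ Z.subgroupOf H, b * q = q * b := by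
    intro b hb q
    obtain ⟨a, haA, rfl⟩ := memB b hb
    induction q using QuotientGroup.induction_on with
    | H x =>
      rw [← QuotientGroup.mk_mul, ← QuotientGroup.mk_mul]
      congr 1
      exact Subtype.ext ((hcomm ↑x x.2 ↑a (hAK haA)).eq.symm)
  haveI hBnormal : B.Normal := by
    constructor
    intro n hn g
    rw [← hcentB n hn g, mul_assoc, mul_inv_cancel, mul_one]
    exact hn
  have hincl : ∀ x : ↥H, quotInclusion H Z (QuotientGroup.mk x) = QuotientGroup.mk (↑x : G) :=
    fun x => rfl
  have hinclK : ∀ x : ↥K, quotInclusion K Z (QuotientGroup.mk x) = QuotientGroup.mk (↑x : G) :=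
    fun x => rfl
  have hfc : ∀ b ∈ B, ∀ q, (fH : (↥H ⧸ Z.subgroupOf H) → (↥H ⧸ Z.subgroupOf H) → D) b q = (fH : (↥H ⧸ Z.subgroupOf H) → (↥H ⧸ Z.subgroupOf H) → D) q b := by
    intro b hb q
    obtain ⟨a, haA, rfl⟩ := memB b hb
    induction q using QuotientGroup.induction_on with
    | H x =>
      show (f : (G ⧸ Z) → (G ⧸ Z) → D) (QuotientGroup.mk ↑a) (QuotientGroup.mk ↑x)
        = (f : (G ⧸ Z) → (G ⧸ Z) → D) (QuotientGroup.mk ↑x) (QuotientGroup.mk ↑a)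
      exact (hν x ⟨↑a, hAK haA⟩).symm
  rw [AddSubgroup.mem_addSubgroupOf] at hres
  obtain ⟨φK, hφK⟩ := hres
  let ψ : (↥H ⧸ Z.subgroupOf H) → D := fun x =>
    if hx : ∃ a : ↥H, (↑a : G) ∈ K ∧ QuotientGroup.mk a = x then
      φK (QuotientGroup.mk (⟨↑hx.choose, hx.choose_spec.1⟩ : ↥K)) else 0
  have hψval : ∀ (a : ↥H) (ha : (↑a : G) ∈ K),
      ψ (QuotientGroup.mk a) = φK (QuotientGroup.mk (⟨↑a, ha⟩ : ↥K)) := by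
    intro a ha
    have hx : ∃ a' : ↥H, (↑a' : G) ∈ K ∧ QuotientGroup.mk a' = (QuotientGroup.mk a :
        ↥H ⧸ Z.subgroupOf H) := ⟨a, ha, rfl⟩
    show (if hx' : _ then _ else _) = _
    rw [dif_pos hx]
    congr 1
    obtain ⟨ha'K, ha'eq⟩ := hx.choose_spec
    rw [QuotientGroup.eq] at ha'eq ⊢
    rw [Subgroup.mem_subgroupOf] at ha'eq ⊢
    simpa using ha'eq
  have hψ : ∀ b ∈ B, ∀ b' ∈ B, (fH : (↥H ⧸ Z.subgroupOf H) → (↥H ⧸ Z.subgroupOf H) → D) b b' = ψ b + ψ b' - ψ (b * b') := by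
    intro b hb b' hb'
    obtain ⟨a, haA, rfl⟩ := memB b hb
    obtain ⟨a', haA', rfl⟩ := memB b' hb'
    have key := hφK (QuotientGroup.mk (⟨↑a, hAK haA⟩ : ↥K))
      (QuotientGroup.mk (⟨↑a', hAK haA'⟩ : ↥K))
    rw [← QuotientGroup.mk_mul] at key
    rw [← QuotientGroup.mk_mul, hψval a (hAK haA), hψval a' (hAK haA'),
      hψval (a * a') (K.mul_mem (hAK haA) (hAK haA'))]
    have h2 : (⟨↑(a * a'), K.mul_mem (hAK haA) (hAK haA')⟩ : ↥K)
        = (⟨↑a, hAK haA⟩ : ↥K) * ⟨↑a', hAK haA'⟩ := Subtype.ext rfl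
    rw [h2]
    exact key
  obtain ⟨w, hw⟩ := descent fH B hcentB hfc ψ hψ
  let e := QuotientGroup.quotientQuotientEquivQuotient (Z.subgroupOf H) (A.subgroupOf H)
    (subgroupOf_le hZA H)
  refine ⟨pullCocycle e.symm.toMonoidHom w, ?_⟩
  have hsection : ∀ x : ↥H ⧸ Z.subgroupOf H,
      e.symm (quotProj (subgroupOf_le hZA H) x) = QuotientGroup.mk' B x := by
    intro x
    induction x using QuotientGroup.induction_on with
    | H h =>
      rw [MulEquiv.symm_apply_eq]
      exact (QuotientGroup.quotientQuotientEquivQuotientAux_mk_mk (Z.subgroupOf H)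
        (A.subgroupOf H) (subgroupOf_le hZA H) h).symm
  have hcomp : pullCocycle (quotProj (subgroupOf_le hZA H)) (pullCocycle e.symm.toMonoidHom w)
      = pullCocycle (QuotientGroup.mk' B) w := by
    apply Subtype.ext
    funext x y
    show (w : ((↥H ⧸ Z.subgroupOf H) ⧸ B) → ((↥H ⧸ Z.subgroupOf H) ⧸ B) → D) (e.symm (quotProj (subgroupOf_le hZA H) x))
        (e.symm (quotProj (subgroupOf_le hZA H) y))
      = (w : ((↥H ⧸ Z.subgroupOf H) ⧸ B) → ((↥H ⧸ Z.subgroupOf H) ⧸ B) → D) (QuotientGroup.mk' B x) (QuotientGroup.mk' B y)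
    rw [hsection x, hsection y]
  rw [hcomp]
  exact hw

end Core

section Helpers

theorem H2Map_mk {G D : Type} [Group G] [AddCommGroup D] {G' : Type} [Group G'] (π : G' →* G)
    (f : cocycles2 G D) : H2Map π (H2mk f) = H2mk (pullCocycle π f) := rfl

theorem H2mk_surjective {G D : Type} [Group G] [AddCommGroup D] :
    Function.Surjective (H2mk : cocycles2 G D → H2 G D) :=
  QuotientAddGroup.mk_surjective

theorem ab_of_surjective {X : Type} [Group X] :
    Function.Surjective (Abelianization.of (G := X)) := by
  intro w
  induction w using QuotientGroup.induction_on with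
  | H x => exact ⟨x, rfl⟩

theorem ab_of_eq_one {X : Type} [Group X] (x : X) (hx : x ∈ commutator X) :
    Abelianization.of x = 1 := (QuotientGroup.eq_one_iff x).mpr hx

theorem ker_abmap {X Y : Type} [Group X] [Group Y] (p : X →* Y) (hp : Function.Surjective p)
    (w : Abelianization X) (hw : Abelianization.map p w = 1) :
    ∃ x : X, p x = 1 ∧ Abelianization.of x = w := by
  obtain ⟨x₀, rfl⟩ := ab_of_surjective w
  rw [Abelianization.map_of] at hw
  have h1 : p x₀ ∈ commutator Y := (QuotientGroup.eq_one_iff _).mp hw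
  have h2 : commutator Y = Subgroup.map p (commutator X) := by
    rw [commutator_def, commutator_def, Subgroup.map_commutator,
      Subgroup.map_top_of_surjective p hp]
  rw [h2] at h1
  obtain ⟨c, hc, hpc⟩ := h1
  refine ⟨x₀ * c⁻¹, ?_, ?_⟩
  · rw [map_mul, map_inv, hpc, mul_inv_cancel]
  · rw [map_mul, map_inv, ab_of_eq_one c hc, inv_one, mul_one]

theorem quotProj_surjective {X : Type} [Group X] {N M : Subgroup X} [N.Normal] [M.Normal]
    (h : N ≤ M) : Function.Surjective (quotProj h) := by
  intro y
  induction y using QuotientGroup.induction_on with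
  | H g => exact ⟨QuotientGroup.mk g, rfl⟩

theorem quotProj_ker {X : Type} [Group X] {N M : Subgroup X} [N.Normal] [M.Normal]
    (h : N ≤ M) (x : X ⧸ N) (hx : quotProj h x = 1) :
    ∃ m : X, m ∈ M ∧ QuotientGroup.mk m = x := by
  induction x using QuotientGroup.induction_on with
  | H g =>
    have hg : (QuotientGroup.mk g : X ⧸ M) = 1 := hx
    exact ⟨g, (QuotientGroup.eq_one_iff g).mp hg, rfl⟩

theorem abAdd_surjective {X Y : Type} [Group X] [Group Y] (p : X →* Y)
    (hp : Function.Surjective p) :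
    Function.Surjective (MonoidHom.toAdditive (Abelianization.map p)) := by
  intro w
  obtain ⟨y, hy⟩ := ab_of_surjective (Additive.toMul w)
  obtain ⟨x, rfl⟩ := hp y
  refine ⟨Additive.ofMul (Abelianization.of x), ?_⟩
  show Additive.ofMul (Abelianization.map p (Abelianization.of x)) = w
  rw [Abelianization.map_of, hy]
  rfl

theorem mem_commutator_of_coe {X : Type} [Group X] (H : Subgroup X) (x : ↥H)
    (hx : (↑x : X) ∈ ⁅H, H⁆) : x ∈ commutator ↥H := by
  have h1 : ⁅H, H⁆ = Subgroup.map H.subtype (commutator ↥H) := by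
    rw [commutator_def, Subgroup.map_commutator, ← MonoidHom.range_eq_map,
      Subgroup.range_subtype]
  rw [h1] at hx
  obtain ⟨y, hy, hyx⟩ := hx
  have : y = x := Subtype.coe_injective hyx
  rwa [← this]

theorem ab_map_injective {X : Type} [Group X] (N : Subgroup X) [N.Normal]
    (hN : N ≤ commutator X) :
    Function.Injective (Abelianization.map (QuotientGroup.mk' N)) := by
  rw [injective_iff_map_eq_one]
  intro u hu
  obtain ⟨x, hx1, rfl⟩ := ker_abmap (QuotientGroup.mk' N) (QuotientGroup.mk'_surjective N) u hu
  exact ab_of_eq_one x (hN ((QuotientGroup.eq_one_iff x).mp hx1))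

noncomputable def factorSurj {M N P : Type} [AddCommGroup M] [AddCommGroup N] [AddCommGroup P]
    (f : M →+ N) (hf : Function.Surjective f) (g : M →+ P)
    (hker : ∀ x, f x = 0 → g x = 0) : N →+ P :=
  f.liftOfRightInverse (Function.surjInv hf) (Function.rightInverse_surjInv hf)
    ⟨g, fun x hx => by
      rw [AddMonoidHom.mem_ker] at hx
      rw [AddMonoidHom.mem_ker]
      exact hker x hx⟩

theorem factorSurj_apply {M N P : Type} [AddCommGroup M] [AddCommGroup N] [AddCommGroup P]
    (f : M →+ N) (hf : Function.Surjective f) (g : M →+ P)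
    (hker : ∀ x, f x = 0 → g x = 0) (x : M) : factorSurj f hf g hker (f x) = g x :=
  AddMonoidHom.liftOfRightInverse_comp_apply _ _ _ _ _

/-- Precomposition of `AddMonoidHom`s with an `AddEquiv`, as an `AddEquiv`. -/
def homCongr {M N P : Type} [AddCommGroup M] [AddCommGroup N] [AddCommGroup P]
    (e : M ≃+ N) : (M →+ P) ≃+ (N →+ P) where
  toFun φ := φ.comp e.symm.toAddMonoidHom
  invFun φ := φ.comp e.toAddMonoidHom
  left_inv φ := by ext x; simp
  right_inv φ := by ext x; simp
  map_add' φ ψ := by ext x; simp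

theorem abAdd_elt_surj {X : Type} [Group X] (N : Subgroup X) [N.Normal]
    (y : Additive (Abelianization (X ⧸ N))) :
    ∃ x : X, Additive.ofMul (Abelianization.of (QuotientGroup.mk x :  X ⧸ N)) = y := by
  obtain ⟨w, hw⟩ := ab_of_surjective (Additive.toMul y)
  revert hw
  induction w using QuotientGroup.induction_on with
  | H x => intro hw; exact ⟨x, congrArg Additive.ofMul hw⟩

end Helpers


/-- If `θ'̄ : H²(G/Z, D) → H²(H/Z, D) ⊕ H²(K/Z, D) ⊕ Hom(H/Z ⊗ K/Z, D)` is an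
isomorphism, then the inflation maps `H²(H/A, D) → H²(H/Z, D)` and
`H²(K/A, D) → H²(K/Z, D)` are surjective and
`λ* : Hom(H/A ⊗ K/A, D) → Hom(H/Z ⊗ K/Z, D)` is an isomorphism; consequently, if the
embedding of Theorem B (ii) is an isomorphism, then so is the embedding of
Theorem B (i). -/
theorem second_iso_implies_first {G : Type} [Group G] (H K : Subgroup G) [H.Normal] [K.Normal]
    (hprod : H ⊔ K = ⊤) (hcomm : ∀ h ∈ H, ∀ k ∈ K, Commute h k)
    (D : Type) [AddCommGroup D] [DivisibleBy D ℤ]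
    [(⁅H, H⁆ ⊓ ⁅K, K⁆).Normal]
    [((H ⊓ K).subgroupOf H).Normal] [((H ⊓ K).subgroupOf K).Normal]
    [((⁅H, H⁆ ⊓ ⁅K, K⁆).subgroupOf H).Normal] [((⁅H, H⁆ ⊓ ⁅K, K⁆).subgroupOf K).Normal]
    (νbar : H2 (G ⧸ (⁅H, H⁆ ⊓ ⁅K, K⁆)) D →+
      (AbTensor (↥H ⧸ (⁅H, H⁆ ⊓ ⁅K, K⁆).subgroupOf H)
         (↥K ⧸ (⁅H, H⁆ ⊓ ⁅K, K⁆).subgroupOf K) →+ D))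
    (hνbar : ∀ f : cocycles2 (G ⧸ (⁅H, H⁆ ⊓ ⁅K, K⁆)) D, ∀ (h : ↥H) (k : ↥K),
      νbar (H2mk f)
          (tmulAb (QuotientGroup.mk h : ↥H ⧸ (⁅H, H⁆ ⊓ ⁅K, K⁆).subgroupOf H)
            (QuotientGroup.mk k : ↥K ⧸ (⁅H, H⁆ ⊓ ⁅K, K⁆).subgroupOf K)) =
        (f : (G ⧸ (⁅H, H⁆ ⊓ ⁅K, K⁆)) → (G ⧸ (⁅H, H⁆ ⊓ ⁅K, K⁆)) → D)
            (QuotientGroup.mk (↑h : G)) (QuotientGroup.mk (↑k : G)) -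
        (f : (G ⧸ (⁅H, H⁆ ⊓ ⁅K, K⁆)) → (G ⧸ (⁅H, H⁆ ⊓ ⁅K, K⁆)) → D)
            (QuotientGroup.mk (↑k : G)) (QuotientGroup.mk (↑h : G)))
    (hθbar : Function.Bijective (fun ξ : H2 (G ⧸ (⁅H, H⁆ ⊓ ⁅K, K⁆)) D =>
      (H2Map (quotInclusion H (⁅H, H⁆ ⊓ ⁅K, K⁆)) ξ,
       H2Map (quotInclusion K (⁅H, H⁆ ⊓ ⁅K, K⁆)) ξ, νbar ξ))) :
    Function.Surjective (inflMap (subgroupOf_le (inf_commutator_le_inf H K) H) D) ∧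
    Function.Surjective (inflMap (subgroupOf_le (inf_commutator_le_inf H K) K) D) ∧
    Function.Bijective
      (fun φ : (AbTensor (↥H ⧸ (H ⊓ K).subgroupOf H) (↥K ⧸ (H ⊓ K).subgroupOf K) →+ D) =>
        φ.comp (abTensorMap (quotProj (subgroupOf_le (inf_commutator_le_inf H K) H))
          (quotProj (subgroupOf_le (inf_commutator_le_inf H K) K))).toAddMonoidHom) ∧
    ((∃ N : AddSubgroup
          (H2 (↥H ⧸ (⁅H, H⁆ ⊓ ⁅K, K⁆).subgroupOf H) D ×
           H2 (↥K ⧸ (⁅H, H⁆ ⊓ ⁅K, K⁆).subgroupOf K) D),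
        Nonempty (↥N ≃+ (Additive ↥(⁅H, H⁆ ⊓ ⁅K, K⁆) →+ D)) ∧
        Nonempty (H2 G D ≃+
          (((H2 (↥H ⧸ (⁅H, H⁆ ⊓ ⁅K, K⁆).subgroupOf H) D ×
             H2 (↥K ⧸ (⁅H, H⁆ ⊓ ⁅K, K⁆).subgroupOf K) D) ⧸ N) ×
           (AbTensor ↥H ↥K →+ D)))) →
      (∃ N' : AddSubgroup
          ((H2 (↥H ⧸ (H ⊓ K).subgroupOf H) D ⧸
              AddMonoidHom.ker (inflMap (subgroupOf_le (inf_commutator_le_inf H K) H) D)) ×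
           (H2 (↥K ⧸ (H ⊓ K).subgroupOf K) D ⧸
              AddMonoidHom.ker (inflMap (subgroupOf_le (inf_commutator_le_inf H K) K) D))),
        Nonempty (↥N' ≃+ (Additive ↥(⁅H, H⁆ ⊓ ⁅K, K⁆) →+ D)) ∧
        Nonempty (H2 G D ≃+
          ((((H2 (↥H ⧸ (H ⊓ K).subgroupOf H) D ⧸
               AddMonoidHom.ker (inflMap (subgroupOf_le (inf_commutator_le_inf H K) H) D)) ×
             (H2 (↥K ⧸ (H ⊓ K).subgroupOf K) D ⧸
               AddMonoidHom.ker (inflMap (subgroupOf_le (inf_commutator_le_inf H K) K) D))) ⧸ N') ×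
           (AbTensor (↥H ⧸ (H ⊓ K).subgroupOf H) (↥K ⧸ (H ⊓ K).subgroupOf K) →+ D))))) := by
  classical
  have hsurjH : Function.Surjective (inflMap (subgroupOf_le (inf_commutator_le_inf H K) H) D) := by
    intro η
    obtain ⟨ξ, hξ⟩ := hθbar.2 (η, 0, 0)
    obtain ⟨f, rfl⟩ := H2mk_surjective ξ
    simp only [Prod.mk.injEq] at hξ
    obtain ⟨hres1, hres2, hν0⟩ := hξ
    have hν : ∀ (h : ↥H) (k : ↥K),
        (f : (G ⧸ (⁅H, H⁆ ⊓ ⁅K, K⁆)) → (G ⧸ (⁅H, H⁆ ⊓ ⁅K, K⁆)) → D)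
            (QuotientGroup.mk ↑h) (QuotientGroup.mk ↑k)
          = (f : (G ⧸ (⁅H, H⁆ ⊓ ⁅K, K⁆)) → (G ⧸ (⁅H, H⁆ ⊓ ⁅K, K⁆)) → D)
            (QuotientGroup.mk ↑k) (QuotientGroup.mk ↑h) := by
      intro h k
      have h1 := hνbar f h k
      rw [hν0] at h1
      simp only [AddMonoidHom.zero_apply] at h1
      exact sub_eq_zero.mp h1.symm
    have hresK : pullCocycle (quotInclusion K (⁅H, H⁆ ⊓ ⁅K, K⁆)) f ∈
        (coboundaries2 (↥K ⧸ (⁅H, H⁆ ⊓ ⁅K, K⁆).subgroupOf K) D).addSubgroupOf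
          (cocycles2 _ D) := by
      have h2 : H2mk (pullCocycle (quotInclusion K (⁅H, H⁆ ⊓ ⁅K, K⁆)) f) = 0 := by
        rw [← H2Map_mk]; exact hres2
      exact (QuotientAddGroup.eq_zero_iff _).mp h2
    obtain ⟨v, hv⟩ := descend_class H K (H ⊓ K) (⁅H, H⁆ ⊓ ⁅K, K⁆)
      (inf_commutator_le_inf H K) inf_le_left inf_le_right hcomm f hν hresK
    refine ⟨H2mk v, ?_⟩
    have h3 : inflMap (subgroupOf_le (inf_commutator_le_inf H K) H) D (H2mk v)
        = H2mk (pullCocycle (quotProj (subgroupOf_le (inf_commutator_le_inf H K) H)) v) := rfl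
    rw [h3, ← hres1, H2Map_mk]
    exact (QuotientAddGroup.eq_iff_sub_mem).mpr hv
  have hsurjK : Function.Surjective (inflMap (subgroupOf_le (inf_commutator_le_inf H K) K) D) := by
    intro η
    obtain ⟨ξ, hξ⟩ := hθbar.2 (0, η, 0)
    obtain ⟨f, rfl⟩ := H2mk_surjective ξ
    simp only [Prod.mk.injEq] at hξ
    obtain ⟨hres1, hres2, hν0⟩ := hξ
    have hν : ∀ (k : ↥K) (h : ↥H),
        (f : (G ⧸ (⁅H, H⁆ ⊓ ⁅K, K⁆)) → (G ⧸ (⁅H, H⁆ ⊓ ⁅K, K⁆)) → D)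
            (QuotientGroup.mk ↑k) (QuotientGroup.mk ↑h)
          = (f : (G ⧸ (⁅H, H⁆ ⊓ ⁅K, K⁆)) → (G ⧸ (⁅H, H⁆ ⊓ ⁅K, K⁆)) → D)
            (QuotientGroup.mk ↑h) (QuotientGroup.mk ↑k) := by
      intro k h
      have h1 := hνbar f h k
      rw [hν0] at h1
      simp only [AddMonoidHom.zero_apply] at h1
      exact (sub_eq_zero.mp h1.symm).symm
    have hresH : pullCocycle (quotInclusion H (⁅H, H⁆ ⊓ ⁅K, K⁆)) f ∈
        (coboundaries2 (↥H ⧸ (⁅H, H⁆ ⊓ ⁅K, K⁆).subgroupOf H) D).addSubgroupOf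
          (cocycles2 _ D) := by
      have h2 : H2mk (pullCocycle (quotInclusion H (⁅H, H⁆ ⊓ ⁅K, K⁆)) f) = 0 := by
        rw [← H2Map_mk]; exact hres1
      exact (QuotientAddGroup.eq_zero_iff _).mp h2
    obtain ⟨v, hv⟩ := descend_class K H (H ⊓ K) (⁅H, H⁆ ⊓ ⁅K, K⁆)
      (inf_commutator_le_inf H K) inf_le_right inf_le_left
      (fun k hk h hh => (hcomm h hh k hk).symm) f hν hresH
    refine ⟨H2mk v, ?_⟩
    have h3 : inflMap (subgroupOf_le (inf_commutator_le_inf H K) K) D (H2mk v)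
        = H2mk (pullCocycle (quotProj (subgroupOf_le (inf_commutator_le_inf H K) K)) v) := rfl
    rw [h3, ← hres2, H2Map_mk]
    exact (QuotientAddGroup.eq_iff_sub_mem).mpr hv
  -- surjectivity facts for the abelianized projections
  have hmH : Function.Surjective (MonoidHom.toAdditive
      (Abelianization.map (quotProj (subgroupOf_le (inf_commutator_le_inf H K) H)))) :=
    abAdd_surjective _ (quotProj_surjective _)
  have hmK : Function.Surjective (MonoidHom.toAdditive
      (Abelianization.map (quotProj (subgroupOf_le (inf_commutator_le_inf H K) K)))) :=
    abAdd_surjective _ (quotProj_surjective _)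
  have hmapsurj : Function.Surjective
      (abTensorMap (quotProj (subgroupOf_le (inf_commutator_le_inf H K) H))
        (quotProj (subgroupOf_le (inf_commutator_le_inf H K) K))) :=
    TensorProduct.map_surjective hmH hmK
  have lamBij : Function.Bijective
      (fun φ : (AbTensor (↥H ⧸ (H ⊓ K).subgroupOf H) (↥K ⧸ (H ⊓ K).subgroupOf K) →+ D) =>
        φ.comp (abTensorMap (quotProj (subgroupOf_le (inf_commutator_le_inf H K) H))
          (quotProj (subgroupOf_le (inf_commutator_le_inf H K) K))).toAddMonoidHom) := by
    constructor
    · intro φ1 φ2 h12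
      apply AddMonoidHom.ext
      intro u
      obtain ⟨t, rfl⟩ := hmapsurj u
      exact congrArg (fun F => F t) h12
    · intro φ
      obtain ⟨ξ, hξ⟩ := hθbar.2 (0, 0, φ)
      obtain ⟨f, rfl⟩ := H2mk_surjective ξ
      simp only [Prod.mk.injEq] at hξ
      obtain ⟨hres1, hres2, hν0⟩ := hξ
      have hφval : ∀ (h : ↥H) (k : ↥K),
          φ (tmulAb (QuotientGroup.mk h : ↥H ⧸ (⁅H, H⁆ ⊓ ⁅K, K⁆).subgroupOf H)
              (QuotientGroup.mk k : ↥K ⧸ (⁅H, H⁆ ⊓ ⁅K, K⁆).subgroupOf K))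
            = (f : (G ⧸ (⁅H, H⁆ ⊓ ⁅K, K⁆)) → (G ⧸ (⁅H, H⁆ ⊓ ⁅K, K⁆)) → D)
                (QuotientGroup.mk ↑h) (QuotientGroup.mk ↑k)
              - (f : (G ⧸ (⁅H, H⁆ ⊓ ⁅K, K⁆)) → (G ⧸ (⁅H, H⁆ ⊓ ⁅K, K⁆)) → D)
                (QuotientGroup.mk ↑k) (QuotientGroup.mk ↑h) := by
        intro h k
        rw [← hν0]
        exact hνbar f h k
      have hresH' : pullCocycle (quotInclusion H (⁅H, H⁆ ⊓ ⁅K, K⁆)) f ∈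
          (coboundaries2 (↥H ⧸ (⁅H, H⁆ ⊓ ⁅K, K⁆).subgroupOf H) D).addSubgroupOf
            (cocycles2 _ D) := by
        have h2 : H2mk (pullCocycle (quotInclusion H (⁅H, H⁆ ⊓ ⁅K, K⁆)) f) = 0 := by
          rw [← H2Map_mk]; exact hres1
        exact (QuotientAddGroup.eq_zero_iff _).mp h2
      have hresK' : pullCocycle (quotInclusion K (⁅H, H⁆ ⊓ ⁅K, K⁆)) f ∈
          (coboundaries2 (↥K ⧸ (⁅H, H⁆ ⊓ ⁅K, K⁆).subgroupOf K) D).addSubgroupOf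
            (cocycles2 _ D) := by
        have h2 : H2mk (pullCocycle (quotInclusion K (⁅H, H⁆ ⊓ ⁅K, K⁆)) f) = 0 := by
          rw [← H2Map_mk]; exact hres2
        exact (QuotientAddGroup.eq_zero_iff _).mp h2
      rw [AddSubgroup.mem_addSubgroupOf] at hresH' hresK'
      obtain ⟨φH, hφH⟩ := hresH'
      obtain ⟨φK, hφK⟩ := hresK'
      -- φ vanishes on tensors with an A-element on the left
      have vanish1 : ∀ (a : ↥H), (↑a : G) ∈ H ⊓ K → ∀ (k : ↥K),
          φ (tmulAb (QuotientGroup.mk a : ↥H ⧸ (⁅H, H⁆ ⊓ ⁅K, K⁆).subgroupOf H)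
            (QuotientGroup.mk k : ↥K ⧸ (⁅H, H⁆ ⊓ ⁅K, K⁆).subgroupOf K)) = 0 := by
        intro a ha k
        rw [hφval a k]
        have e1 : (f : (G ⧸ (⁅H, H⁆ ⊓ ⁅K, K⁆)) → (G ⧸ (⁅H, H⁆ ⊓ ⁅K, K⁆)) → D)
            (QuotientGroup.mk ↑a) (QuotientGroup.mk ↑k)
            = φK (QuotientGroup.mk (⟨↑a, ha.2⟩ : ↥K)) + φK (QuotientGroup.mk k)
              - φK (QuotientGroup.mk ((⟨↑a, ha.2⟩ : ↥K) * k)) := by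
          have h5 := hφK (QuotientGroup.mk (⟨↑a, ha.2⟩ : ↥K)) (QuotientGroup.mk k)
          rw [← QuotientGroup.mk_mul] at h5
          exact h5
        have e2 : (f : (G ⧸ (⁅H, H⁆ ⊓ ⁅K, K⁆)) → (G ⧸ (⁅H, H⁆ ⊓ ⁅K, K⁆)) → D)
            (QuotientGroup.mk ↑k) (QuotientGroup.mk ↑a)
            = φK (QuotientGroup.mk k) + φK (QuotientGroup.mk (⟨↑a, ha.2⟩ : ↥K))
              - φK (QuotientGroup.mk (k * (⟨↑a, ha.2⟩ : ↥K))) := by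
          have h5 := hφK (QuotientGroup.mk k) (QuotientGroup.mk (⟨↑a, ha.2⟩ : ↥K))
          rw [← QuotientGroup.mk_mul] at h5
          exact h5
        rw [e1, e2, show (⟨↑a, ha.2⟩ : ↥K) * k = k * (⟨↑a, ha.2⟩ : ↥K) from
          Subtype.ext (hcomm ↑a ha.1 ↑k k.2).eq]
        abel
      have vanish2 : ∀ (a : ↥K), (↑a : G) ∈ H ⊓ K → ∀ (h : ↥H),
          φ (tmulAb (QuotientGroup.mk h : ↥H ⧸ (⁅H, H⁆ ⊓ ⁅K, K⁆).subgroupOf H)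
            (QuotientGroup.mk a : ↥K ⧸ (⁅H, H⁆ ⊓ ⁅K, K⁆).subgroupOf K)) = 0 := by
        intro a ha h
        rw [hφval h a]
        have e1 : (f : (G ⧸ (⁅H, H⁆ ⊓ ⁅K, K⁆)) → (G ⧸ (⁅H, H⁆ ⊓ ⁅K, K⁆)) → D)
            (QuotientGroup.mk ↑h) (QuotientGroup.mk ↑a)
            = φH (QuotientGroup.mk h) + φH (QuotientGroup.mk (⟨↑a, ha.1⟩ : ↥H))
              - φH (QuotientGroup.mk (h * (⟨↑a, ha.1⟩ : ↥H))) := by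
          have h5 := hφH (QuotientGroup.mk h) (QuotientGroup.mk (⟨↑a, ha.1⟩ : ↥H))
          rw [← QuotientGroup.mk_mul] at h5
          exact h5
        have e2 : (f : (G ⧸ (⁅H, H⁆ ⊓ ⁅K, K⁆)) → (G ⧸ (⁅H, H⁆ ⊓ ⁅K, K⁆)) → D)
            (QuotientGroup.mk ↑a) (QuotientGroup.mk ↑h)
            = φH (QuotientGroup.mk (⟨↑a, ha.1⟩ : ↥H)) + φH (QuotientGroup.mk h)
              - φH (QuotientGroup.mk ((⟨↑a, ha.1⟩ : ↥H) * h)) := by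
          have h5 := hφH (QuotientGroup.mk (⟨↑a, ha.1⟩ : ↥H)) (QuotientGroup.mk h)
          rw [← QuotientGroup.mk_mul] at h5
          exact h5
        rw [e1, e2, show h * (⟨↑a, ha.1⟩ : ↥H) = (⟨↑a, ha.1⟩ : ↥H) * h from
          Subtype.ext (hcomm ↑h h.2 ↑a ha.2).eq]
        abel
      -- kernel conditions
      have kerH : ∀ t, (MonoidHom.toAdditive
            (Abelianization.map (quotProj (subgroupOf_le (inf_commutator_le_inf H K) H)))) t = 0 →
          ∀ y, φ (t ⊗ₜ[ℤ] y) = 0 := by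
        intro t ht y
        have ht' : Abelianization.map (quotProj (subgroupOf_le (inf_commutator_le_inf H K) H))
            (Additive.toMul t) = 1 := ht
        obtain ⟨x, hx1, hx2⟩ := ker_abmap _ (quotProj_surjective _) _ ht'
        obtain ⟨m, hm, rfl⟩ := quotProj_ker _ x hx1
        obtain ⟨kk, hkk⟩ := abAdd_elt_surj _ y
        rw [← hkk, show t = Additive.ofMul (Abelianization.of (QuotientGroup.mk m)) from
          (congrArg Additive.ofMul hx2).symm]
        exact vanish1 m (Subgroup.mem_subgroupOf.mp hm) kk
      have kerK : ∀ s, (MonoidHom.toAdditive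
            (Abelianization.map (quotProj (subgroupOf_le (inf_commutator_le_inf H K) K)))) s = 0 →
          ∀ x, φ (x ⊗ₜ[ℤ] s) = 0 := by
        intro s hs x
        have hs' : Abelianization.map (quotProj (subgroupOf_le (inf_commutator_le_inf H K) K))
            (Additive.toMul s) = 1 := hs
        obtain ⟨w, hw1, hw2⟩ := ker_abmap _ (quotProj_surjective _) _ hs'
        obtain ⟨m, hm, rfl⟩ := quotProj_ker _ w hw1
        obtain ⟨hh, hhh⟩ := abAdd_elt_surj _ x
        rw [← hhh, show s = Additive.ofMul (Abelianization.of (QuotientGroup.mk m)) from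
          (congrArg Additive.ofMul hw2).symm]
        exact vanish2 m (Subgroup.mem_subgroupOf.mp hm) hh
      -- build the factored homomorphism
      let c1 := (TensorProduct.curry φ.toIntLinearMap).toAddMonoidHom
      have hker1 : ∀ t, (MonoidHom.toAdditive
          (Abelianization.map (quotProj (subgroupOf_le (inf_commutator_le_inf H K) H)))) t = 0 →
          c1 t = 0 := fun t ht => LinearMap.ext fun y => kerH t ht y
      let F1 := factorSurj _ hmH c1 hker1
      have hker3 : ∀ s, (MonoidHom.toAdditive
          (Abelianization.map (quotProj (subgroupOf_le (inf_commutator_le_inf H K) K)))) s = 0 →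
          ((F1.toIntLinearMap).flip).toAddMonoidHom s = 0 := by
        intro s hs
        apply LinearMap.ext
        intro x'
        obtain ⟨x, rfl⟩ := hmH x'
        show F1 ((MonoidHom.toAdditive (Abelianization.map
          (quotProj (subgroupOf_le (inf_commutator_le_inf H K) H)))) x) s = 0
        rw [show F1 ((MonoidHom.toAdditive (Abelianization.map
            (quotProj (subgroupOf_le (inf_commutator_le_inf H K) H)))) x) = c1 x from
          factorSurj_apply _ hmH c1 hker1 x]
        exact kerK s hs x
      let F3 := factorSurj _ hmK ((F1.toIntLinearMap).flip).toAddMonoidHom hker3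
      refine ⟨(TensorProduct.lift ((F3.toIntLinearMap).flip)).toAddMonoidHom, ?_⟩
      apply AddMonoidHom.ext
      intro t
      show TensorProduct.lift ((F3.toIntLinearMap).flip)
        (abTensorMap (quotProj (subgroupOf_le (inf_commutator_le_inf H K) H))
          (quotProj (subgroupOf_le (inf_commutator_le_inf H K) K)) t) = φ t
      induction t using TensorProduct.induction_on with
      | zero => simp
      | tmul x y =>
        have s1 : TensorProduct.lift ((F3.toIntLinearMap).flip)
            (abTensorMap (quotProj (subgroupOf_le (inf_commutator_le_inf H K) H))
              (quotProj (subgroupOf_le (inf_commutator_le_inf H K) K)) (x ⊗ₜ[ℤ] y))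
            = F3 ((MonoidHom.toAdditive (Abelianization.map
                (quotProj (subgroupOf_le (inf_commutator_le_inf H K) K)))) y)
              ((MonoidHom.toAdditive (Abelianization.map
                (quotProj (subgroupOf_le (inf_commutator_le_inf H K) H)))) x) := rfl
        rw [s1, show F3 ((MonoidHom.toAdditive (Abelianization.map
            (quotProj (subgroupOf_le (inf_commutator_le_inf H K) K)))) y)
            = ((F1.toIntLinearMap).flip).toAddMonoidHom y from
          factorSurj_apply _ hmK _ hker3 y]
        show F1 ((MonoidHom.toAdditive (Abelianization.map
          (quotProj (subgroupOf_le (inf_commutator_le_inf H K) H)))) x) y = φ (x ⊗ₜ[ℤ] y)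
        rw [show F1 ((MonoidHom.toAdditive (Abelianization.map
            (quotProj (subgroupOf_le (inf_commutator_le_inf H K) H)))) x) = c1 x from
          factorSurj_apply _ hmH c1 hker1 x]
        rfl
      | add a b ha hb =>
        rw [map_add, map_add, ha, hb, map_add]
  refine ⟨hsurjH, hsurjK, lamBij, ?_⟩
  rintro ⟨N, ⟨eN⟩, ⟨eG⟩⟩
  let eqH := QuotientAddGroup.quotientKerEquivOfSurjective
    (inflMap (subgroupOf_le (inf_commutator_le_inf H K) H) D) hsurjH
  let eqK := QuotientAddGroup.quotientKerEquivOfSurjective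
    (inflMap (subgroupOf_le (inf_commutator_le_inf H K) K) D) hsurjK
  let e2 := AddEquiv.prodCongr eqH eqK
  have he : (N.comap e2.toAddMonoidHom).map e2.toAddMonoidHom = N :=
    AddSubgroup.map_comap_eq_self_of_surjective e2.surjective N
  refine ⟨N.comap e2.toAddMonoidHom, ⟨?_⟩, ⟨?_⟩⟩
  · exact ((AddEquiv.addSubgroupMap e2 _).trans (AddEquiv.addSubgroupCongr he)).trans eN
  · -- the big isomorphism
    have hinj1 : Function.Injective ((MonoidHom.toAdditive (Abelianization.map
        (QuotientGroup.mk' ((⁅H, H⁆ ⊓ ⁅K, K⁆).subgroupOf H)))).toIntLinearMap) := by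
      intro a b hab
      exact ab_map_injective _ (fun x hx => mem_commutator_of_coe H x
        ((Subgroup.mem_inf.mp (Subgroup.mem_subgroupOf.mp hx)).1)) hab
    have hinj2 : Function.Injective ((MonoidHom.toAdditive (Abelianization.map
        (QuotientGroup.mk' ((⁅H, H⁆ ⊓ ⁅K, K⁆).subgroupOf K)))).toIntLinearMap) := by
      intro a b hab
      exact ab_map_injective _ (fun x hx => mem_commutator_of_coe K x
        ((Subgroup.mem_inf.mp (Subgroup.mem_subgroupOf.mp hx)).2)) hab
    have hsur1 : Function.Surjective ((MonoidHom.toAdditive (Abelianization.map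
        (QuotientGroup.mk' ((⁅H, H⁆ ⊓ ⁅K, K⁆).subgroupOf H)))).toIntLinearMap) :=
      abAdd_surjective _ (QuotientGroup.mk'_surjective _)
    have hsur2 : Function.Surjective ((MonoidHom.toAdditive (Abelianization.map
        (QuotientGroup.mk' ((⁅H, H⁆ ⊓ ⁅K, K⁆).subgroupOf K)))).toIntLinearMap) :=
      abAdd_surjective _ (QuotientGroup.mk'_surjective _)
    let l1 := LinearEquiv.ofBijective _ ⟨hinj1, hsur1⟩
    let l2 := LinearEquiv.ofBijective _ ⟨hinj2, hsur2⟩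
    let eT := TensorProduct.congr l1 l2
    let lamEquiv := AddEquiv.mk' (Equiv.ofBijective _ lamBij)
      (fun φ ψ => AddMonoidHom.add_comp _ _ _)
    let qe := QuotientAddGroup.congr (N.comap e2.toAddMonoidHom) N e2 he
    exact eG.trans (AddEquiv.prodCongr qe.symm
      ((homCongr eT.toAddEquiv).trans lamEquiv.symm))


end SchurCP
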